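/- If Γ is a (G,3)-CH graph of girth 3 which is not complete, then for a vertex u the induced subgraph on Γ(u) is vertex-transitive and edge-transitive under G_u, and G_u acts transitively on the set of pairs of distinct non-adjacent vertices of Γ(u). -/

import Mathlib

open SimpleGraph

variable {V : Type*}

/-- `Γ` is `(G,3)`-connected-homogeneous: every isomorphism between connected induced
subgraphs of order at most 3 extends to an automorphism in `G`. -/
def IsCH3 (Γ : SimpleGraph V) (G : Subgroup (Γ ≃g Γ)) : Prop :=
  ∀ (A B : Set V), A.ncard ≤ 3 → (SimpleGraph.induce A Γ).Connected →
    ∀ φ : (SimpleGraph.induce A Γ) ≃g (SimpleGraph.induce B Γ),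
      ∃ g ∈ G, ∀ a : A, (g : Γ ≃g Γ) a.1 = ((φ a) : V)

/-- `G` is transitive on the vertices of `Γ`. -/
def VertexTrans (Γ : SimpleGraph V) (G : Subgroup (Γ ≃g Γ)) : Prop :=
  ∀ u v : V, ∃ g ∈ G, (g : Γ ≃g Γ) u = v

/-- The stabiliser of `u` in `G` is transitive on the neighbourhood of `u`. -/
def StabTrans (Γ : SimpleGraph V) (G : Subgroup (Γ ≃g Γ)) (u : V) : Prop :=
  ∀ v ∈ Γ.neighborSet u, ∀ w ∈ Γ.neighborSet u,
    ∃ g ∈ G, (g : Γ ≃g Γ) u = u ∧ (g : Γ ≃g Γ) v = w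

/-- The stabiliser of `u` in `G` is 2-transitive on the neighbourhood of `u`. -/
def Stab2Trans (Γ : SimpleGraph V) (G : Subgroup (Γ ≃g Γ)) (u : V) : Prop :=
  StabTrans Γ G u ∧
  ∀ v w v' w', v ∈ Γ.neighborSet u → w ∈ Γ.neighborSet u →
    v' ∈ Γ.neighborSet u → w' ∈ Γ.neighborSet u → v ≠ w → v' ≠ w' →
    ∃ g ∈ G, (g : Γ ≃g Γ) u = u ∧ (g : Γ ≃g Γ) v = v' ∧ (g : Γ ≃g Γ) w = w'

/-- Two ordered pairs are equivalent under the stabiliser of `u` in `G`. -/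
def PairEquiv (Γ : SimpleGraph V) (G : Subgroup (Γ ≃g Γ)) (u : V) (p q : V × V) : Prop :=
  ∃ g ∈ G, (g : Γ ≃g Γ) u = u ∧ (g : Γ ≃g Γ) p.1 = q.1 ∧ (g : Γ ≃g Γ) p.2 = q.2

/-- The stabiliser of `u` in `G` induces on the neighbourhood of `u` a transitive group
of rank 3: it is transitive, and it has exactly three orbits on ordered pairs of
neighbours of `u`. -/
def StabRank3 (Γ : SimpleGraph V) (G : Subgroup (Γ ≃g Γ)) (u : V) : Prop :=
  StabTrans Γ G u ∧
  ∃ p₁ p₂ p₃ : V × V,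
    (p₁.1 ∈ Γ.neighborSet u ∧ p₁.2 ∈ Γ.neighborSet u) ∧
    (p₂.1 ∈ Γ.neighborSet u ∧ p₂.2 ∈ Γ.neighborSet u) ∧
    (p₃.1 ∈ Γ.neighborSet u ∧ p₃.2 ∈ Γ.neighborSet u) ∧
    ¬ PairEquiv Γ G u p₁ p₂ ∧ ¬ PairEquiv Γ G u p₁ p₃ ∧ ¬ PairEquiv Γ G u p₂ p₃ ∧
    ∀ q : V × V, q.1 ∈ Γ.neighborSet u → q.2 ∈ Γ.neighborSet u →
      PairEquiv Γ G u p₁ q ∨ PairEquiv Γ G u p₂ q ∨ PairEquiv Γ G u p₃ q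

/-- A graph is complete multipartite iff non-adjacency is transitive. -/
def IsCompleteMultipartite (Γ : SimpleGraph V) : Prop :=
  Transitive fun x y => ¬ Γ.Adj x y

/-- The disjoint union `rKℓ` of `r` complete graphs on `ℓ` vertices. -/
def cliquesGraph (r ℓ : ℕ) : SimpleGraph (Fin r × Fin ℓ) where
  Adj x y := x.1 = y.1 ∧ x.2 ≠ y.2
  symm := ⟨fun x y h => ⟨h.1.symm, h.2.symm⟩⟩
  loopless := ⟨fun x h => h.2 rfl⟩

lemma induce_connected_of_center {Γ : SimpleGraph V} {A : Set V} {z : V} (hz : z ∈ A)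
    (h : ∀ x ∈ A, x = z ∨ Γ.Adj z x) : (SimpleGraph.induce A Γ).Connected := by
  have key : ∀ x : A, (SimpleGraph.induce A Γ).Reachable ⟨z, hz⟩ x := by
    rintro ⟨x, hx⟩
    rcases h x hx with rfl | hadj
    · exact SimpleGraph.Reachable.refl _
    · exact SimpleGraph.Adj.reachable (by exact hadj)
  have : Nonempty A := ⟨⟨z, hz⟩⟩
  exact ⟨fun x y => (key x).symm.trans (key y)⟩

lemma ch3_extend {Γ : SimpleGraph V} {G : Subgroup (Γ ≃g Γ)} (hCH : IsCH3 Γ G)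
    (A : Set V) (f : V → V) (hcard : A.ncard ≤ 3)
    (hconn : (SimpleGraph.induce A Γ).Connected)
    (hinj : Set.InjOn f A)
    (hadj : ∀ x ∈ A, ∀ y ∈ A, Γ.Adj x y ↔ Γ.Adj (f x) (f y)) :
    ∃ g ∈ G, ∀ a ∈ A, (g : Γ ≃g Γ) a = f a := by
  set B : Set V := f '' A with hB
  have hbij : Function.Bijective (fun a : A => (⟨f a.1, ⟨a.1, a.2, rfl⟩⟩ : B)) := by
    constructor
    · intro a b hab
      exact Subtype.ext (hinj a.2 b.2 (congrArg Subtype.val hab))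
    · rintro ⟨b, x, hx, rfl⟩
      exact ⟨⟨x, hx⟩, rfl⟩
  let φ : (SimpleGraph.induce A Γ) ≃g (SimpleGraph.induce B Γ) :=
    { toEquiv := Equiv.ofBijective _ hbij
      map_rel_iff' := by
        intro a b
        exact (hadj a.1 a.2 b.1 b.2).symm }
  obtain ⟨g, hg, hgall⟩ := hCH A B hcard hconn φ
  exact ⟨g, hg, fun a ha => hgall ⟨a, ha⟩⟩

lemma ch3_two {Γ : SimpleGraph V} {G : Subgroup (Γ ≃g Γ)} (hCH : IsCH3 Γ G)
    {u v w : V} (hv : Γ.Adj u v) (hw : Γ.Adj u w) :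
    ∃ g ∈ G, (g : Γ ≃g Γ) u = u ∧ (g : Γ ≃g Γ) v = w := by
  classical
  have hvu : v ≠ u := fun h => Γ.loopless.irrefl u (h ▸ hv)
  have hwu : w ≠ u := fun h => Γ.loopless.irrefl u (h ▸ hw)
  set A : Set V := {u, v} with hA
  set f : V → V := fun x => if x = v then w else x with hf
  have fu : f u = u := by simp [hf, Ne.symm hvu]
  have fv : f v = w := by simp [hf]
  have hmem : ∀ x ∈ A, x = u ∨ x = v := by
    intro x hx; simpa [hA] using hx
  have hcard : A.ncard ≤ 3 := by
    calc A.ncard ≤ ({v} : Set V).ncard + 1 := Set.ncard_insert_le _ _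
    _ ≤ 3 := by simp
  have hconn : (SimpleGraph.induce A Γ).Connected := by
    apply induce_connected_of_center (z := u) (by simp [hA])
    intro x hx
    rcases hmem x hx with rfl | rfl
    · exact Or.inl rfl
    · exact Or.inr hv
  have hinj : Set.InjOn f A := by
    intro x hx y hy hxy
    rcases hmem x hx with rfl | rfl <;> rcases hmem y hy with rfl | rfl
    · rfl
    · rw [fu, fv] at hxy; exact absurd hxy.symm hwu
    · rw [fu, fv] at hxy; exact absurd hxy hwu
    · rfl
  have hadj : ∀ x ∈ A, ∀ y ∈ A, Γ.Adj x y ↔ Γ.Adj (f x) (f y) := by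
    intro x hx y hy
    rcases hmem x hx with rfl | rfl <;> rcases hmem y hy with rfl | rfl
    · rw [fu]
    · rw [fu, fv]; exact iff_of_true hv hw
    · rw [fu, fv]; exact iff_of_true hv.symm hw.symm
    · rw [fv]; simp
  obtain ⟨g, hg, hgall⟩ := ch3_extend hCH A f hcard hconn hinj hadj
  exact ⟨g, hg, by simpa [fu] using hgall u (by simp [hA]),
    by simpa [fv] using hgall v (by simp [hA])⟩

lemma ch3_three {Γ : SimpleGraph V} {G : Subgroup (Γ ≃g Γ)} (hCH : IsCH3 Γ G)
    {u v w v' w' : V} (hv : Γ.Adj u v) (hw : Γ.Adj u w)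
    (hv' : Γ.Adj u v') (hw' : Γ.Adj u w') (hvw : v ≠ w) (hvw' : v' ≠ w')
    (hiff : Γ.Adj v w ↔ Γ.Adj v' w') :
    ∃ g ∈ G, (g : Γ ≃g Γ) u = u ∧ (g : Γ ≃g Γ) v = v' ∧ (g : Γ ≃g Γ) w = w' := by
  classical
  have hvu : v ≠ u := fun h => Γ.loopless.irrefl u (h ▸ hv)
  have hwu : w ≠ u := fun h => Γ.loopless.irrefl u (h ▸ hw)
  have hvu' : v' ≠ u := fun h => Γ.loopless.irrefl u (h ▸ hv')
  have hwu' : w' ≠ u := fun h => Γ.loopless.irrefl u (h ▸ hw')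
  set A : Set V := {u, v, w} with hA
  set f : V → V := fun x => if x = u then u else if x = v then v' else w' with hf
  have fu : f u = u := by simp [hf]
  have fv : f v = v' := by simp [hf, hvu]
  have fw : f w = w' := by simp [hf, hwu, Ne.symm hvw]
  have hmem : ∀ x ∈ A, x = u ∨ x = v ∨ x = w := by
    intro x hx; simpa [hA] using hx
  have hcard : A.ncard ≤ 3 := by
    calc A.ncard ≤ ({v, w} : Set V).ncard + 1 := Set.ncard_insert_le _ _
    _ ≤ ({w} : Set V).ncard + 1 + 1 := by
        exact Nat.add_le_add_right (Set.ncard_insert_le _ _) 1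
    _ ≤ 3 := by simp
  have hconn : (SimpleGraph.induce A Γ).Connected := by
    apply induce_connected_of_center (z := u) (by simp [hA])
    intro x hx
    rcases hmem x hx with rfl | rfl | rfl
    · exact Or.inl rfl
    · exact Or.inr hv
    · exact Or.inr hw
  have hiff' : Γ.Adj w v ↔ Γ.Adj w' v' :=
    ⟨fun h => (hiff.mp h.symm).symm, fun h => (hiff.mpr h.symm).symm⟩
  have hinj : Set.InjOn f A := by
    intro x hx y hy hxy
    rcases hmem x hx with rfl | rfl | rfl <;> rcases hmem y hy with rfl | rfl | rfl
    · rfl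
    · rw [fu, fv] at hxy; exact absurd hxy.symm hvu'
    · rw [fu, fw] at hxy; exact absurd hxy.symm hwu'
    · rw [fu, fv] at hxy; exact absurd hxy hvu'
    · rfl
    · rw [fv, fw] at hxy; exact absurd hxy hvw'
    · rw [fu, fw] at hxy; exact absurd hxy hwu'
    · rw [fv, fw] at hxy; exact absurd hxy.symm hvw'
    · rfl
  have hadj : ∀ x ∈ A, ∀ y ∈ A, Γ.Adj x y ↔ Γ.Adj (f x) (f y) := by
    intro x hx y hy
    rcases hmem x hx with rfl | rfl | rfl <;> rcases hmem y hy with rfl | rfl | rfl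
    · rw [fu]
    · rw [fu, fv]; exact iff_of_true hv hv'
    · rw [fu, fw]; exact iff_of_true hw hw'
    · rw [fv, fu]; exact iff_of_true hv.symm hv'.symm
    · rw [fv]; simp
    · rw [fv, fw]; exact hiff
    · rw [fw, fu]; exact iff_of_true hw.symm hw'.symm
    · rw [fw, fv]; exact hiff'
    · rw [fw]; simp
  obtain ⟨g, hg, hgall⟩ := ch3_extend hCH A f hcard hconn hinj hadj
  exact ⟨g, hg, by simpa [fu] using hgall u (by simp [hA]),
    by simpa [fv] using hgall v (by simp [hA]),
    by simpa [fw] using hgall w (by simp [hA])⟩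

/-- If `Γ` is a `(G,3)`-CH graph of girth 3 which is not complete, then for every
vertex `u` the stabiliser `G_u` is transitive on `Γ(u)`, transitive on the arcs of
the induced subgraph on `Γ(u)`, and transitive on the pairs of distinct
non-adjacent vertices of `Γ(u)`. -/
theorem stab_trans_on_arcs_and_nonedges {V : Type*} [Fintype V]
    (Γ : SimpleGraph V) (G : Subgroup (Γ ≃g Γ))
    (hconn : Γ.Connected) (hCH : IsCH3 Γ G)
    (hgirth : Γ.girth = 3) (hnc : Γ ≠ ⊤) :
    ∀ u : V,
      StabTrans Γ G u ∧
      (∀ v w v' w', v ∈ Γ.neighborSet u → w ∈ Γ.neighborSet u →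
        v' ∈ Γ.neighborSet u → w' ∈ Γ.neighborSet u →
        Γ.Adj v w → Γ.Adj v' w' →
        ∃ g ∈ G, (g : Γ ≃g Γ) u = u ∧ (g : Γ ≃g Γ) v = v' ∧ (g : Γ ≃g Γ) w = w') ∧
      (∀ v w v' w', v ∈ Γ.neighborSet u → w ∈ Γ.neighborSet u →
        v' ∈ Γ.neighborSet u → w' ∈ Γ.neighborSet u →
        v ≠ w → v' ≠ w' → ¬ Γ.Adj v w → ¬ Γ.Adj v' w' →
        ∃ g ∈ G, (g : Γ ≃g Γ) u = u ∧ (g : Γ ≃g Γ) v = v' ∧ (g : Γ ≃g Γ) w = w') := by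
  intro u
  refine ⟨fun v hv w hw => ch3_two hCH hv hw, ?_, ?_⟩
  · intro v w v' w' hv hw hv' hw' hvw hvw'
    exact ch3_three hCH hv hw hv' hw' hvw.ne hvw'.ne (by simp [hvw, hvw'])
  · intro v w v' w' hv hw hv' hw' hne hne' hnadj hnadj'
    exact ch3_three hCH hv hw hv' hw' hne hne' (by simp [hnadj, hnadj'])
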